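/- Let (P₁,…,P_J) be a multivariate species sampling process with non-atomic base measure P₀, and let X be a sample from (P₁,…,P_J). Then for all j ≠ k in {1,…,J} and every Borel set A with Var[P_j(A)] > 0 and Var[P_k(A)] > 0: Corr[P_j(A), P_k(A)] = ℙ(X_{j,1} = X_{k,1}) / ( √ℙ(X_{j,1} = X_{j,2}) · √ℙ(X_{k,1} = X_{k,2}) ). In particular, the correlation does not depend on the choice of the set A. -/

import Mathlib

open MeasureTheory ProbabilityTheory
open scoped ENNReal

namespace MSSP

variable {Ω : Type*} [MeasurableSpace Ω] {𝕏 : Type*} [MeasurableSpace 𝕏]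

/-- The species-sampling mixture measure `∑ₕ wₕ δ_{aₕ} + (1 - ∑ₕ wₕ) P₀`. -/
noncomputable def mixM (P₀ : Measure 𝕏) (w : ℕ → ℝ) (a : ℕ → 𝕏) : Measure 𝕏 :=
  Measure.sum (fun h => ENNReal.ofReal (w h) • Measure.dirac (a h)) +
    ENNReal.ofReal (1 - ∑' h, w h) • P₀

/-- `(P j)_{j}` is a multivariate species sampling process with base measure `P₀`,
weight array `π` and atoms `θ`. -/
structure IsMSSPwith {ι : Type*} (Pr : Measure Ω) (P₀ : Measure 𝕏)
    (P : ι → Ω → Measure 𝕏) (π : ι → ℕ → Ω → ℝ) (θ : ℕ → Ω → 𝕏) : Prop where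
  measP : ∀ j (A : Set 𝕏), MeasurableSet A → Measurable fun ω => P j ω A
  probP : ∀ j ω, IsProbabilityMeasure (P j ω)
  measπ : ∀ j h, Measurable (π j h)
  subprob : ∀ j, ∀ᵐ ω ∂Pr, (∀ h, 0 ≤ π j h ω ∧ π j h ω ≤ 1) ∧ ∑' h, π j h ω ≤ 1
  measθ : ∀ h, Measurable (θ h)
  lawθ : ∀ h, Measure.map (θ h) Pr = P₀
  iidθ : iIndepFun θ Pr
  indepθπ : IndepFun (fun ω (h : ℕ) => θ h ω) (fun ω (j : ι) (h : ℕ) => π j h ω) Pr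
  repr : ∀ j, ∀ᵐ ω ∂Pr, P j ω = mixM P₀ (fun h => π j h ω) (fun h => θ h ω)

/-- `(P j)_j` is a multivariate species sampling process with base measure `P₀`. -/
def IsMSSP {ι : Type*} (Pr : Measure Ω) (P₀ : Measure 𝕏)
    (P : ι → Ω → Measure 𝕏) : Prop :=
  ∃ π θ, IsMSSPwith Pr P₀ P π θ

/-- `X` is a sample from the vector of random probability measures `P`:
conditionally on `P` the entries are independent, with `X j i` distributed as `P j`. -/
def IsSample {ι : Type*} (Pr : Measure Ω) (P : ι → Ω → Measure 𝕏)
    (X : ι → ℕ → Ω → 𝕏) : Prop :=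
  (∀ j i, Measurable (X j i)) ∧
  ∀ (s : Finset (ι × ℕ)) (A : ι × ℕ → Set 𝕏), (∀ p ∈ s, MeasurableSet (A p)) →
    Pr {ω | ∀ p ∈ s, X p.1 p.2 ω ∈ A p} = ∫⁻ ω, ∏ p ∈ s, P p.1 ω (A p) ∂Pr

/-- Covariance of two real random variables. -/
noncomputable def covR (Pr : Measure Ω) (f g : Ω → ℝ) : ℝ :=
  ∫ ω, f ω * g ω ∂Pr - (∫ ω, f ω ∂Pr) * (∫ ω, g ω ∂Pr)

/-- Correlation of two real random variables. -/
noncomputable def corrR (Pr : Measure Ω) (f g : Ω → ℝ) : ℝ :=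
  covR Pr f g / (Real.sqrt (variance f Pr) * Real.sqrt (variance g Pr))


lemma measurableSet_diag {𝕏 : Type*} [MeasurableSpace 𝕏] [StandardBorelSpace 𝕏] :
    MeasurableSet {p : 𝕏 × 𝕏 | p.1 = p.2} := by
  letI := upgradeStandardBorel 𝕏
  exact measurable_fst.stronglyMeasurable.measurableSet_eq_fun measurable_snd.stronglyMeasurable

lemma lintegral_mixM [MeasurableSingletonClass 𝕏] (P₀ : Measure 𝕏) (w : ℕ → ℝ) (t : ℕ → 𝕏)
    (f : 𝕏 → ℝ≥0∞) :
    ∫⁻ x, f x ∂(mixM P₀ w t) = (∑' h, ENNReal.ofReal (w h) * f (t h)) +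
      ENNReal.ofReal (1 - ∑' h, w h) * ∫⁻ x, f x ∂P₀ := by
  rw [mixM, lintegral_add_measure, lintegral_sum_measure, lintegral_smul_measure]
  congr 1
  exact tsum_congr fun h => by rw [lintegral_smul_measure, lintegral_dirac, smul_eq_mul]

lemma mixM_apply [MeasurableSingletonClass 𝕏] (P₀ : Measure 𝕏) (w : ℕ → ℝ) (t : ℕ → 𝕏)
    {A : Set 𝕏} (hA : MeasurableSet A) :
    mixM P₀ w t A = (∑' h, ENNReal.ofReal (w h) * A.indicator 1 (t h)) +
      ENNReal.ofReal (1 - ∑' h, w h) * P₀ A := by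
  rw [mixM, Measure.add_apply, Measure.sum_apply _ hA, Measure.smul_apply, smul_eq_mul]
  congr 1
  exact tsum_congr fun h => by
    rw [Measure.smul_apply, Measure.dirac_apply, smul_eq_mul]

lemma mixM_singleton [MeasurableSingletonClass 𝕏] (P₀ : Measure 𝕏) [NullSingletonClass P₀]
    (w : ℕ → ℝ) (t : ℕ → 𝕏) (x : 𝕏) :
    mixM P₀ w t {x} = ∑' h, Set.indicator {t h} (fun _ => ENNReal.ofReal (w h)) x := by
  rw [mixM_apply P₀ w t (measurableSet_singleton x), measure_singleton, mul_zero, add_zero]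
  refine tsum_congr fun h => ?_
  by_cases hx : t h = x
  · simp [hx, Set.indicator_of_mem]
  · rw [Set.indicator_of_notMem (by simpa using hx),
      Set.indicator_of_notMem (by simpa using fun q => hx q.symm), mul_zero]

lemma mixM_prod_diag {𝕏 : Type*} [MeasurableSpace 𝕏] [StandardBorelSpace 𝕏]
    (P₀ : Measure 𝕏) [NullSingletonClass P₀] (a b : ℕ → ℝ) (t : ℕ → 𝕏) (ht : Function.Injective t)
    [SFinite (mixM P₀ b t)] :
    (mixM P₀ a t).prod (mixM P₀ b t) {p : 𝕏 × 𝕏 | p.1 = p.2}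
      = ∑' h, ENNReal.ofReal (a h) * ENNReal.ofReal (b h) := by
  rw [Measure.prod_apply measurableSet_diag]
  have hpre : ∀ x : 𝕏, (Prod.mk x ⁻¹' {p : 𝕏 × 𝕏 | p.1 = p.2}) = {x} := by
    intro x; ext y; simp [eq_comm]
  simp_rw [hpre]
  rw [lintegral_mixM]
  have h1 : ∀ h, mixM P₀ b t {t h} = ENNReal.ofReal (b h) := by
    intro h
    rw [mixM_singleton]
    have he : ∑' l, Set.indicator {t l} (fun _ => ENNReal.ofReal (b l)) (t h)
        = Set.indicator {t h} (fun _ => ENNReal.ofReal (b h)) (t h) :=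
      tsum_eq_single h fun l hl =>
        Set.indicator_of_notMem (by simpa using fun q => hl (ht q.symm)) _
    rw [he]; exact Set.indicator_of_mem rfl fun _ => ENNReal.ofReal (b h)
  have h2 : ∫⁻ x, mixM P₀ b t {x} ∂P₀ = 0 := by
    have hr : P₀ (Set.range t) = 0 := (Set.countable_range t).measure_zero _
    have hae : ∀ᵐ x ∂P₀, mixM P₀ b t {x} = 0 := by
      filter_upwards [measure_eq_zero_iff_ae_notMem.mp hr] with x hx
      rw [mixM_singleton]
      have : ∀ h : ℕ, Set.indicator {t h} (fun _ => ENNReal.ofReal (b h)) x = 0 := fun h =>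
        Set.indicator_of_notMem (by simpa using fun q => hx ⟨h, q.symm⟩) _
      simp [this]
    rw [lintegral_congr_ae hae, lintegral_zero]
  simp_rw [h1]
  rw [h2, mul_zero, add_zero]



lemma repr_ae [MeasurableSingletonClass 𝕏] {ι : Type*} (Pr : Measure Ω) (P₀ : Measure 𝕏)
    {P : ι → Ω → Measure 𝕏} {π : ι → ℕ → Ω → ℝ} {θ : ℕ → Ω → 𝕏}
    (hm : IsMSSPwith Pr P₀ P π θ) (j : ι) :
    ∀ᵐ ω ∂Pr, (∑' h, ENNReal.ofReal (π j h ω) ≤ 1) ∧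
      ∀ (B : Set 𝕏), MeasurableSet B →
        P j ω B = (∑' h, ENNReal.ofReal (π j h ω) * B.indicator 1 (θ h ω)) +
          (1 - ∑' h, ENNReal.ofReal (π j h ω)) * P₀ B := by
  filter_upwards [hm.subprob j, hm.repr j] with ω hs hr
  have h1 : P j ω Set.univ = 1 := (hm.probP j ω).measure_univ
  rw [hr, mixM_apply P₀ _ _ MeasurableSet.univ] at h1
  simp only [Set.indicator_univ, Pi.one_apply, mul_one, measure_univ] at h1
  have hS : ∑' h, ENNReal.ofReal (π j h ω) ≤ 1 := le_of_le_of_eq le_self_add h1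
  have hsummable : Summable fun h => π j h ω := by
    have hne : ∑' h, ENNReal.ofReal (π j h ω) ≠ ⊤ :=
      (lt_of_le_of_lt hS ENNReal.one_lt_top).ne
    exact (ENNReal.summable_toReal hne).congr fun h =>
      ENNReal.toReal_ofReal (hs.1 h).1
  have hofs : ENNReal.ofReal (1 - ∑' h, π j h ω)
      = 1 - ∑' h, ENNReal.ofReal (π j h ω) := by
    rw [ENNReal.ofReal_sub _ (tsum_nonneg fun h => (hs.1 h).1), ENNReal.ofReal_one,
      ENNReal.ofReal_tsum_of_nonneg (fun h => (hs.1 h).1) hsummable]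
  exact ⟨hS, fun B hB => by rw [hr, mixM_apply P₀ _ _ hB, hofs]⟩

section Moments

variable [MeasurableSingletonClass 𝕏] {ι : Type*} {Pr : Measure Ω} {P₀ : Measure 𝕏}
  {P : ι → Ω → Measure 𝕏} {π : ι → ℕ → Ω → ℝ} {θ : ℕ → Ω → 𝕏}
  [IsProbabilityMeasure Pr] [IsProbabilityMeasure P₀]

lemma moment_mul (hm : IsMSSPwith Pr P₀ P π θ)
    (j k : ι) (A : Set 𝕏) (hA : MeasurableSet A) :
    ∫⁻ ω, P j ω A * P k ω A ∂Pr
      = P₀ A * P₀ A + (P₀ A - P₀ A * P₀ A) *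
          ∫⁻ ω, ∑' h, ENNReal.ofReal (π j h ω) * ENNReal.ofReal (π k h ω) ∂Pr := by
  classical
  -- abbreviations (definitional)
  have hind : Measurable (A.indicator (1 : 𝕏 → ℝ≥0∞)) := measurable_one.indicator hA
  set p : ℝ≥0∞ := P₀ A with hp
  have hp1 : p ≤ 1 := prob_le_one
  have hpp : p * p ≤ p := mul_le_of_le_one_left zero_le hp1
  set u : ℕ → Ω → ℝ≥0∞ := fun h ω => A.indicator 1 (θ h ω) with hu
  set α : ℕ → Ω → ℝ≥0∞ := fun h ω => ENNReal.ofReal (π j h ω) with hα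
  set β : ℕ → Ω → ℝ≥0∞ := fun h ω => ENNReal.ofReal (π k h ω) with hβ
  set Sj : Ω → ℝ≥0∞ := fun ω => ∑' h, α h ω with hSj
  set Sk : Ω → ℝ≥0∞ := fun ω => ∑' h, β h ω with hSk
  set Tj : Ω → ℝ≥0∞ := fun ω => 1 - Sj ω with hTj
  set Tk : Ω → ℝ≥0∞ := fun ω => 1 - Sk ω with hTk
  have mu : ∀ h, Measurable (u h) := fun h => hind.comp (hm.measθ h)
  have mα : ∀ h, Measurable (α h) := fun h => ENNReal.measurable_ofReal.comp (hm.measπ j h)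
  have mβ : ∀ h, Measurable (β h) := fun h => ENNReal.measurable_ofReal.comp (hm.measπ k h)
  have mSj : Measurable Sj := Measurable.ennreal_tsum mα
  have mSk : Measurable Sk := Measurable.ennreal_tsum mβ
  have mTj : Measurable Tj := measurable_const.sub mSj
  have mTk : Measurable Tk := measurable_const.sub mSk
  -- independence tool
  have hθmeas : Measurable fun ω (h : ℕ) => θ h ω := measurable_pi_lambda _ hm.measθ
  have hπmeas : Measurable fun ω (j' : ι) (h : ℕ) => π j' h ω :=
    measurable_pi_lambda _ fun j' => measurable_pi_lambda _ fun h => hm.measπ j' h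
  have hsplit : ∀ (Φ : (ℕ → 𝕏) → ℝ≥0∞) (Ψ : (ι → ℕ → ℝ) → ℝ≥0∞), Measurable Φ → Measurable Ψ →
      ∫⁻ ω, Φ (fun h => θ h ω) * Ψ (fun j' h => π j' h ω) ∂Pr
        = (∫⁻ ω, Φ (fun h => θ h ω) ∂Pr) * ∫⁻ ω, Ψ (fun j' h => π j' h ω) ∂Pr := by
    intro Φ Ψ hΦ hΨ
    have := lintegral_mul_eq_lintegral_mul_lintegral_of_indepFun
      (μ := Pr) (f := fun ω => Φ (fun h => θ h ω)) (g := fun ω => Ψ (fun j' h => π j' h ω))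
      (hΦ.comp hθmeas) (hΨ.comp hπmeas) (hm.indepθπ.comp hΦ hΨ)
    simpa using this
  -- E[u h] = p
  have hup : ∀ h, ∫⁻ ω, u h ω ∂Pr = p := by
    intro h
    calc ∫⁻ ω, u h ω ∂Pr = ∫⁻ x, A.indicator 1 x ∂(Pr.map (θ h)) :=
      (lintegral_map hind (hm.measθ h)).symm
    _ = ∫⁻ x, A.indicator 1 x ∂P₀ := by rw [hm.lawθ h]
    _ = p := by rw [lintegral_indicator_one hA]
  -- E[u h * u l]
  have huu : ∀ h l, ∫⁻ ω, u h ω * u l ω ∂Pr = if h = l then p else p * p := by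
    intro h l
    by_cases hhl : h = l
    · subst hhl
      rw [if_pos rfl, ← hup h]
      refine lintegral_congr fun ω => ?_
      by_cases hx : θ h ω ∈ A
      · simp [hu, Set.indicator_of_mem hx]
      · simp [hu, Set.indicator_of_notMem hx]
    · rw [if_neg hhl]
      have hI : IndepFun (u h) (u l) Pr := (hm.iidθ.indepFun hhl).comp hind hind
      have h2 := lintegral_mul_eq_lintegral_mul_lintegral_of_indepFun (mu h) (mu l) hI
      rw [hup h, hup l] at h2
      simpa using h2
  -- the key independent-factor identity
  have hαβ : ∀ h l, ∫⁻ ω, α h ω * u h ω * (β l ω * u l ω) ∂Pr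
      = (if h = l then p else p * p) * ∫⁻ ω, α h ω * β l ω ∂Pr := by
    intro h l
    have hΦ : Measurable fun f : ℕ → 𝕏 =>
        A.indicator (1 : 𝕏 → ℝ≥0∞) (f h) * A.indicator 1 (f l) :=
      (hind.comp (measurable_pi_apply h)).mul (hind.comp (measurable_pi_apply l))
    have hΨ : Measurable fun g : ι → ℕ → ℝ =>
        ENNReal.ofReal (g j h) * ENNReal.ofReal (g k l) :=
      (ENNReal.measurable_ofReal.comp
        ((measurable_pi_apply h).comp (measurable_pi_apply j))).mul
      (ENNReal.measurable_ofReal.comp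
        ((measurable_pi_apply l).comp (measurable_pi_apply k)))
    have h1 := hsplit _ _ hΦ hΨ
    have h2 : ∫⁻ ω, α h ω * u h ω * (β l ω * u l ω) ∂Pr
        = ∫⁻ ω, u h ω * u l ω * (α h ω * β l ω) ∂Pr :=
      lintegral_congr fun ω => by ring
    rw [h2]
    calc ∫⁻ ω, u h ω * u l ω * (α h ω * β l ω) ∂Pr
        = (∫⁻ ω, u h ω * u l ω ∂Pr) * ∫⁻ ω, α h ω * β l ω ∂Pr := h1
    _ = (if h = l then p else p * p) * ∫⁻ ω, α h ω * β l ω ∂Pr := by rw [huu h l]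
  -- E[α h * Tk] style splits
  have hαT : ∀ h, ∫⁻ ω, u h ω * (α h ω * Tk ω) ∂Pr = p * ∫⁻ ω, α h ω * Tk ω ∂Pr := by
    intro h
    have hΦ : Measurable fun f : ℕ → 𝕏 => A.indicator (1 : 𝕏 → ℝ≥0∞) (f h) :=
      hind.comp (measurable_pi_apply h)
    have hΨ : Measurable fun g : ι → ℕ → ℝ =>
        ENNReal.ofReal (g j h) * (1 - ∑' l, ENNReal.ofReal (g k l)) :=
      (ENNReal.measurable_ofReal.comp
        ((measurable_pi_apply h).comp (measurable_pi_apply j))).mul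
      (measurable_const.sub (Measurable.ennreal_tsum fun l =>
        ENNReal.measurable_ofReal.comp ((measurable_pi_apply l).comp (measurable_pi_apply k))))
    have h1 := hsplit _ _ hΦ hΨ
    rw [hup h] at h1
    exact h1
  have hTβ : ∀ l, ∫⁻ ω, u l ω * (Tj ω * β l ω) ∂Pr = p * ∫⁻ ω, Tj ω * β l ω ∂Pr := by
    intro l
    have hΦ : Measurable fun f : ℕ → 𝕏 => A.indicator (1 : 𝕏 → ℝ≥0∞) (f l) :=
      hind.comp (measurable_pi_apply l)
    have hΨ : Measurable fun g : ι → ℕ → ℝ =>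
        (1 - ∑' h, ENNReal.ofReal (g j h)) * ENNReal.ofReal (g k l) :=
      (measurable_const.sub (Measurable.ennreal_tsum fun h =>
        ENNReal.measurable_ofReal.comp ((measurable_pi_apply h).comp (measurable_pi_apply j)))).mul
      (ENNReal.measurable_ofReal.comp
        ((measurable_pi_apply l).comp (measurable_pi_apply k)))
    have h1 := hsplit _ _ hΦ hΨ
    rw [hup l] at h1
    exact h1
  -- rewrite LHS using the representation
  have hLHS : ∫⁻ ω, P j ω A * P k ω A ∂Pr
      = ∫⁻ ω, ((∑' h, α h ω * u h ω) + Tj ω * p) * ((∑' h, β h ω * u h ω) + Tk ω * p) ∂Pr := by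
    refine lintegral_congr_ae ?_
    filter_upwards [repr_ae Pr P₀ hm j, repr_ae Pr P₀ hm k] with ω h1 h2
    rw [h1.2 A hA, h2.2 A hA]
  have m1 : Measurable fun ω => (∑' h, α h ω * u h ω) * (∑' h, β h ω * u h ω) :=
    (Measurable.ennreal_tsum fun h => (mα h).mul (mu h)).mul
      (Measurable.ennreal_tsum fun h => (mβ h).mul (mu h))
  have m2 : Measurable fun ω => (∑' h, α h ω * u h ω) * (Tk ω * p) :=
    (Measurable.ennreal_tsum fun h => (mα h).mul (mu h)).mul (mTk.mul measurable_const)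
  have m3 : Measurable fun ω => (Tj ω * p) * (∑' h, β h ω * u h ω) :=
    (mTj.mul measurable_const).mul (Measurable.ennreal_tsum fun h => (mβ h).mul (mu h))
  have hsplit4 : ∫⁻ ω, ((∑' h, α h ω * u h ω) + Tj ω * p)
        * ((∑' h, β h ω * u h ω) + Tk ω * p) ∂Pr
      = (∫⁻ ω, (∑' h, α h ω * u h ω) * (∑' h, β h ω * u h ω) ∂Pr)
        + ((∫⁻ ω, (∑' h, α h ω * u h ω) * (Tk ω * p) ∂Pr)
        + ((∫⁻ ω, (Tj ω * p) * (∑' h, β h ω * u h ω) ∂Pr)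
        + (∫⁻ ω, (Tj ω * p) * (Tk ω * p) ∂Pr))) := by
    have e : ∀ ω, ((∑' h, α h ω * u h ω) + Tj ω * p) * ((∑' h, β h ω * u h ω) + Tk ω * p)
        = (∑' h, α h ω * u h ω) * (∑' h, β h ω * u h ω)
          + ((∑' h, α h ω * u h ω) * (Tk ω * p)
          + ((Tj ω * p) * (∑' h, β h ω * u h ω) + (Tj ω * p) * (Tk ω * p))) := fun ω => by ring
    simp_rw [e]
    rw [lintegral_add_left m1, lintegral_add_left m2, lintegral_add_left m3]
  -- Term 1
  have hT1 : ∫⁻ ω, (∑' h, α h ω * u h ω) * (∑' h, β h ω * u h ω) ∂Pr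
      = p * p * ∫⁻ ω, Sj ω * Sk ω ∂Pr
        + (p - p * p) * ∫⁻ ω, ∑' h, α h ω * β h ω ∂Pr := by
    have e1 : ∀ ω, (∑' h, α h ω * u h ω) * (∑' h, β h ω * u h ω)
        = ∑' (h : ℕ), ∑' (l : ℕ), (α h ω * u h ω) * (β l ω * u l ω) := by
      intro ω
      rw [← ENNReal.tsum_mul_right]
      exact tsum_congr fun h => ENNReal.tsum_mul_left.symm
    have e2 : ∀ h : ℕ, ∫⁻ ω, ∑' (l : ℕ), (α h ω * u h ω) * (β l ω * u l ω) ∂Pr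
        = ∑' (l : ℕ), (if h = l then p else p * p) * ∫⁻ ω, α h ω * β l ω ∂Pr := by
      intro h
      rw [lintegral_tsum fun l =>
        (((mα h).fun_mul (mu h)).fun_mul ((mβ l).fun_mul (mu l))).aemeasurable]
      exact tsum_congr fun l => hαβ h l
    simp_rw [e1]
    calc ∫⁻ ω, ∑' (h : ℕ), ∑' (l : ℕ), (α h ω * u h ω) * (β l ω * u l ω) ∂Pr
        = ∑' (h : ℕ), ∫⁻ ω, ∑' (l : ℕ), (α h ω * u h ω) * (β l ω * u l ω) ∂Pr :=
          lintegral_tsum fun h => (Measurable.ennreal_tsum fun l =>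
            ((mα h).mul (mu h)).mul ((mβ l).mul (mu l))).aemeasurable
    _ = ∑' (h : ℕ), ∑' (l : ℕ), (if h = l then p else p * p) * ∫⁻ ω, α h ω * β l ω ∂Pr :=
          tsum_congr e2
    _ = ∑' (h : ℕ), ∑' (l : ℕ), (p * p * ∫⁻ ω, α h ω * β l ω ∂Pr
          + if h = l then (p - p * p) * ∫⁻ ω, α h ω * β l ω ∂Pr else 0) := by
          refine tsum_congr fun h => tsum_congr fun l => ?_
          by_cases hhl : h = l
          · rw [if_pos hhl, if_pos hhl, ← add_mul, add_tsub_cancel_of_le hpp]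
          · rw [if_neg hhl, if_neg hhl, add_zero]
    _ = (∑' (h : ℕ), ∑' (l : ℕ), p * p * ∫⁻ ω, α h ω * β l ω ∂Pr)
          + ∑' (h : ℕ), ∑' (l : ℕ),
              (if h = l then (p - p * p) * ∫⁻ ω, α h ω * β l ω ∂Pr else 0) := by
          rw [← ENNReal.tsum_add]
          exact tsum_congr fun h => ENNReal.tsum_add
    _ = p * p * ∫⁻ ω, Sj ω * Sk ω ∂Pr
          + (p - p * p) * ∫⁻ ω, ∑' h, α h ω * β h ω ∂Pr := by
          congr 1
          · calc ∑' (h : ℕ), ∑' (l : ℕ), p * p * ∫⁻ ω, α h ω * β l ω ∂Pr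
                = p * p * ∑' (h : ℕ), ∑' (l : ℕ), ∫⁻ ω, α h ω * β l ω ∂Pr := by
                  rw [← ENNReal.tsum_mul_left]
                  exact tsum_congr fun h => ENNReal.tsum_mul_left
            _ = p * p * ∫⁻ ω, Sj ω * Sk ω ∂Pr := by
                  congr 1
                  calc ∑' (h : ℕ), ∑' (l : ℕ), ∫⁻ ω, α h ω * β l ω ∂Pr
                      = ∑' (h : ℕ), ∫⁻ ω, α h ω * Sk ω ∂Pr := by
                        refine tsum_congr fun h => ?_
                        rw [← lintegral_tsum fun l => ((mα h).fun_mul (mβ l)).aemeasurable]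
                        exact lintegral_congr fun ω => ENNReal.tsum_mul_left
                  _ = ∫⁻ ω, Sj ω * Sk ω ∂Pr := by
                        rw [← lintegral_tsum fun h => ((mα h).fun_mul mSk).aemeasurable]
                        exact lintegral_congr fun ω => ENNReal.tsum_mul_right
          · calc ∑' (h : ℕ), ∑' (l : ℕ),
                  (if h = l then (p - p * p) * ∫⁻ ω, α h ω * β l ω ∂Pr else 0)
                = ∑' (h : ℕ), (p - p * p) * ∫⁻ ω, α h ω * β h ω ∂Pr := by
                  refine tsum_congr fun h => ?_
                  refine (tsum_eq_single h fun l hl => ?_).trans (if_pos rfl)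
                  exact if_neg fun q => hl q.symm
            _ = (p - p * p) * ∫⁻ ω, ∑' h, α h ω * β h ω ∂Pr := by
                  rw [ENNReal.tsum_mul_left,
                    lintegral_tsum fun h => ((mα h).fun_mul (mβ h)).aemeasurable]
  -- Term 2
  have hT2 : ∫⁻ ω, (∑' h, α h ω * u h ω) * (Tk ω * p) ∂Pr
      = p * p * ∫⁻ ω, Sj ω * Tk ω ∂Pr := by
    have e1 : ∀ ω, (∑' h, α h ω * u h ω) * (Tk ω * p)
        = ∑' h, u h ω * (α h ω * Tk ω) * p := by
      intro ω
      rw [← ENNReal.tsum_mul_right]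
      exact tsum_congr fun h => by ring
    simp_rw [e1]
    rw [lintegral_tsum fun h =>
      (((mu h).fun_mul ((mα h).fun_mul mTk)).fun_mul measurable_const).aemeasurable]
    calc ∑' h, ∫⁻ ω, u h ω * (α h ω * Tk ω) * p ∂Pr
        = ∑' h, (∫⁻ ω, u h ω * (α h ω * Tk ω) ∂Pr) * p := by
          exact tsum_congr fun h => lintegral_mul_const p ((mu h).mul ((mα h).mul mTk))
    _ = ∑' h, p * p * ∫⁻ ω, α h ω * Tk ω ∂Pr := by
          refine tsum_congr fun h => ?_
          rw [hαT h]; ring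
    _ = p * p * ∑' h, ∫⁻ ω, α h ω * Tk ω ∂Pr := ENNReal.tsum_mul_left
    _ = p * p * ∫⁻ ω, Sj ω * Tk ω ∂Pr := by
          congr 1
          rw [← lintegral_tsum fun h => ((mα h).fun_mul mTk).aemeasurable]
          exact lintegral_congr fun ω => ENNReal.tsum_mul_right
  -- Term 3
  have hT3 : ∫⁻ ω, (Tj ω * p) * (∑' h, β h ω * u h ω) ∂Pr
      = p * p * ∫⁻ ω, Tj ω * Sk ω ∂Pr := by
    have e1 : ∀ ω, (Tj ω * p) * (∑' h, β h ω * u h ω)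
        = ∑' l, u l ω * (Tj ω * β l ω) * p := by
      intro ω
      rw [← ENNReal.tsum_mul_left]
      exact tsum_congr fun l => by ring
    simp_rw [e1]
    rw [lintegral_tsum fun l =>
      (((mu l).fun_mul (mTj.fun_mul (mβ l))).fun_mul measurable_const).aemeasurable]
    calc ∑' l, ∫⁻ ω, u l ω * (Tj ω * β l ω) * p ∂Pr
        = ∑' l, (∫⁻ ω, u l ω * (Tj ω * β l ω) ∂Pr) * p := by
          exact tsum_congr fun l => lintegral_mul_const p ((mu l).mul (mTj.mul (mβ l)))
    _ = ∑' l, p * p * ∫⁻ ω, Tj ω * β l ω ∂Pr := by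
          refine tsum_congr fun l => ?_
          rw [hTβ l]; ring
    _ = p * p * ∑' l, ∫⁻ ω, Tj ω * β l ω ∂Pr := ENNReal.tsum_mul_left
    _ = p * p * ∫⁻ ω, Tj ω * Sk ω ∂Pr := by
          congr 1
          rw [← lintegral_tsum fun l => (mTj.fun_mul (mβ l)).aemeasurable]
          exact lintegral_congr fun ω => ENNReal.tsum_mul_left
  -- Term 4
  have hT4 : ∫⁻ ω, (Tj ω * p) * (Tk ω * p) ∂Pr = p * p * ∫⁻ ω, Tj ω * Tk ω ∂Pr := by
    rw [← lintegral_const_mul _ (mTj.fun_mul mTk)]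
    exact lintegral_congr fun ω => by ring
  -- total mass identity
  have hsum1 : ∫⁻ ω, Sj ω * Sk ω ∂Pr + (∫⁻ ω, Sj ω * Tk ω ∂Pr
      + (∫⁻ ω, Tj ω * Sk ω ∂Pr + ∫⁻ ω, Tj ω * Tk ω ∂Pr)) = 1 := by
    have hone : ∫⁻ ω, (Sj ω * Sk ω + (Sj ω * Tk ω + (Tj ω * Sk ω + Tj ω * Tk ω))) ∂Pr = 1 := by
      have he : ∀ᵐ ω ∂Pr,
          Sj ω * Sk ω + (Sj ω * Tk ω + (Tj ω * Sk ω + Tj ω * Tk ω)) = 1 := by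
        filter_upwards [repr_ae Pr P₀ hm j, repr_ae Pr P₀ hm k] with ω h1 h2
        have hj : Sj ω + Tj ω = 1 := add_tsub_cancel_of_le h1.1
        have hk : Sk ω + Tk ω = 1 := add_tsub_cancel_of_le h2.1
        calc Sj ω * Sk ω + (Sj ω * Tk ω + (Tj ω * Sk ω + Tj ω * Tk ω))
            = (Sj ω + Tj ω) * (Sk ω + Tk ω) := by ring
        _ = 1 := by rw [hj, hk, one_mul]
      rw [lintegral_congr_ae he, lintegral_one, measure_univ]
    rw [lintegral_add_left (mSj.fun_mul mSk), lintegral_add_left (mSj.fun_mul mTk),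
      lintegral_add_left (mTj.fun_mul mSk)] at hone
    exact hone
  rw [hLHS, hsplit4, hT1, hT2, hT3, hT4]
  have hfin : p * p * ∫⁻ ω, Sj ω * Sk ω ∂Pr
        + (p - p * p) * ∫⁻ ω, ∑' h, α h ω * β h ω ∂Pr
        + (p * p * ∫⁻ ω, Sj ω * Tk ω ∂Pr
        + (p * p * ∫⁻ ω, Tj ω * Sk ω ∂Pr + p * p * ∫⁻ ω, Tj ω * Tk ω ∂Pr))
      = p * p * (∫⁻ ω, Sj ω * Sk ω ∂Pr + (∫⁻ ω, Sj ω * Tk ω ∂Pr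
        + (∫⁻ ω, Tj ω * Sk ω ∂Pr + ∫⁻ ω, Tj ω * Tk ω ∂Pr)))
        + (p - p * p) * ∫⁻ ω, ∑' h, α h ω * β h ω ∂Pr := by ring
  rw [hfin, hsum1, mul_one]

lemma moment_one (hm : IsMSSPwith Pr P₀ P π θ)
    (j : ι) (A : Set 𝕏) (hA : MeasurableSet A) :
    ∫⁻ ω, P j ω A ∂Pr = P₀ A := by
  classical
  have hind : Measurable (A.indicator (1 : 𝕏 → ℝ≥0∞)) := measurable_one.indicator hA
  set p : ℝ≥0∞ := P₀ A with hp
  set u : ℕ → Ω → ℝ≥0∞ := fun h ω => A.indicator 1 (θ h ω) with hu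
  set α : ℕ → Ω → ℝ≥0∞ := fun h ω => ENNReal.ofReal (π j h ω) with hα
  set Sj : Ω → ℝ≥0∞ := fun ω => ∑' h, α h ω with hSj
  set Tj : Ω → ℝ≥0∞ := fun ω => 1 - Sj ω with hTj
  have mu : ∀ h, Measurable (u h) := fun h => hind.comp (hm.measθ h)
  have mα : ∀ h, Measurable (α h) := fun h => ENNReal.measurable_ofReal.comp (hm.measπ j h)
  have mSj : Measurable Sj := Measurable.ennreal_tsum mα
  have mTj : Measurable Tj := measurable_const.sub mSj
  have hθmeas : Measurable fun ω (h : ℕ) => θ h ω := measurable_pi_lambda _ hm.measθ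
  have hπmeas : Measurable fun ω (j' : ι) (h : ℕ) => π j' h ω :=
    measurable_pi_lambda _ fun j' => measurable_pi_lambda _ fun h => hm.measπ j' h
  have hup : ∀ h, ∫⁻ ω, u h ω ∂Pr = p := by
    intro h
    calc ∫⁻ ω, u h ω ∂Pr = ∫⁻ x, A.indicator 1 x ∂(Pr.map (θ h)) :=
      (lintegral_map hind (hm.measθ h)).symm
    _ = ∫⁻ x, A.indicator 1 x ∂P₀ := by rw [hm.lawθ h]
    _ = p := by rw [lintegral_indicator_one hA]
  have hUA : ∀ h, ∫⁻ ω, u h ω * α h ω ∂Pr = p * ∫⁻ ω, α h ω ∂Pr := by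
    intro h
    have hΦ : Measurable fun f : ℕ → 𝕏 => A.indicator (1 : 𝕏 → ℝ≥0∞) (f h) :=
      hind.comp (measurable_pi_apply h)
    have hΨ : Measurable fun g : ι → ℕ → ℝ => ENNReal.ofReal (g j h) :=
      ENNReal.measurable_ofReal.comp ((measurable_pi_apply h).comp (measurable_pi_apply j))
    have h1 := lintegral_mul_eq_lintegral_mul_lintegral_of_indepFun
      (μ := Pr) (f := fun ω => A.indicator (1 : 𝕏 → ℝ≥0∞) (θ h ω))
      (g := fun ω => ENNReal.ofReal (π j h ω))
      (hΦ.comp hθmeas) (hΨ.comp hπmeas) (hm.indepθπ.comp hΦ hΨ)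
    rw [show ((fun ω => A.indicator (1 : 𝕏 → ℝ≥0∞) (θ h ω))
        * fun ω => ENNReal.ofReal (π j h ω)) = fun ω => u h ω * α h ω from rfl] at h1
    rw [h1, hup h]
  have hLHS : ∫⁻ ω, P j ω A ∂Pr
      = ∫⁻ ω, (∑' h, α h ω * u h ω) + Tj ω * p ∂Pr := by
    refine lintegral_congr_ae ?_
    filter_upwards [repr_ae Pr P₀ hm j] with ω h1
    rw [h1.2 A hA]
  rw [hLHS, lintegral_add_left (Measurable.ennreal_tsum fun h => (mα h).fun_mul (mu h)),
    lintegral_tsum fun h => ((mα h).fun_mul (mu h)).aemeasurable]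
  have e1 : ∀ h : ℕ, ∫⁻ ω, α h ω * u h ω ∂Pr = p * ∫⁻ ω, α h ω ∂Pr := by
    intro h
    rw [← hUA h]
    exact lintegral_congr fun ω => by ring
  simp_rw [e1]
  rw [ENNReal.tsum_mul_left, lintegral_mul_const p mTj,
    ← lintegral_tsum fun h => (mα h).aemeasurable]
  have : (∫⁻ ω, Sj ω ∂Pr) + (∫⁻ ω, Tj ω ∂Pr) = 1 := by
    rw [← lintegral_add_left mSj]
    have he : ∀ᵐ ω ∂Pr, Sj ω + Tj ω = 1 := by
      filter_upwards [repr_ae Pr P₀ hm j] with ω h1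
      exact add_tsub_cancel_of_le h1.1
    rw [lintegral_congr_ae he, lintegral_one, measure_univ]
  calc p * ∫⁻ ω, Sj ω ∂Pr + (∫⁻ ω, Tj ω ∂Pr) * p
      = p * ((∫⁻ ω, Sj ω ∂Pr) + (∫⁻ ω, Tj ω ∂Pr)) := by ring
  _ = p := by rw [this, mul_one]

end Moments


section Tie

variable {ι : Type*} {Pr : Measure Ω} {P₀ : Measure 𝕏}
  {P : ι → Ω → Measure 𝕏} {π : ι → ℕ → Ω → ℝ} {θ : ℕ → Ω → 𝕏}
  [IsProbabilityMeasure Pr] [IsProbabilityMeasure P₀]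

lemma theta_inj [StandardBorelSpace 𝕏] [NullSingletonClass P₀] (hm : IsMSSPwith Pr P₀ P π θ) :
    ∀ᵐ ω ∂Pr, Function.Injective fun h => θ h ω := by
  have hpair : ∀ h l : ℕ, h ≠ l → (∀ᵐ ω ∂Pr, θ h ω ≠ θ l ω) := by
    intro h l hne
    have hI : IndepFun (θ h) (θ l) Pr := hm.iidθ.indepFun hne
    have hmap : Pr.map (fun ω => (θ h ω, θ l ω)) = (Pr.map (θ h)).prod (Pr.map (θ l)) :=
      (indepFun_iff_map_prod_eq_prod_map_map (hm.measθ h).aemeasurable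
        (hm.measθ l).aemeasurable).mp hI
    have hz : (P₀.prod P₀) {p : 𝕏 × 𝕏 | p.1 = p.2} = 0 := by
      rw [Measure.prod_apply measurableSet_diag]
      have hs : ∀ x : 𝕏, P₀ (Prod.mk x ⁻¹' {p : 𝕏 × 𝕏 | p.1 = p.2}) = 0 := by
        intro x
        have : (Prod.mk x ⁻¹' {p : 𝕏 × 𝕏 | p.1 = p.2}) = {x} := by ext y; simp [eq_comm]
        rw [this, measure_singleton]
      simp [hs]
    have h0 : Pr {ω | θ h ω = θ l ω} = 0 := by
      have hma := Measure.map_apply (μ := Pr) ((hm.measθ h).prodMk (hm.measθ l))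
        (measurableSet_diag (𝕏 := 𝕏))
      rw [hmap, hm.lawθ h, hm.lawθ l, hz] at hma
      exact hma.symm
    exact (ae_iff (p := fun ω => θ h ω ≠ θ l ω)).mpr (by simpa using h0)
  have hAll : ∀ᵐ ω ∂Pr, ∀ h l : ℕ, h ≠ l → θ h ω ≠ θ l ω := by
    rw [ae_all_iff]
    intro h
    rw [ae_all_iff]
    intro l
    by_cases hne : h = l
    · exact Filter.Eventually.of_forall fun ω hc => absurd hne hc
    · filter_upwards [hpair h l hne] with ω hω _ using hω
  filter_upwards [hAll] with ω hω
  intro a b hab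
  by_contra hne
  exact hω a b hne hab

lemma tie_prob [StandardBorelSpace 𝕏] [NullSingletonClass P₀] {X : ι → ℕ → Ω → 𝕏}
    (hm : IsMSSPwith Pr P₀ P π θ) (hX : IsSample Pr P X)
    (j k : ι) (i₁ i₂ : ℕ) (hne : (j, i₁) ≠ (k, i₂)) :
    Pr {ω | X j i₁ ω = X k i₂ ω}
      = ∫⁻ ω, ∑' h, ENNReal.ofReal (π j h ω) * ENNReal.ofReal (π k h ω) ∂Pr := by
  classical
  have hPm : ∀ j', Measurable (P j') := fun j' =>
    Measure.measurable_of_measurable_coe _ fun s hs => hm.measP j' s hs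
  let κ₁ : Kernel Ω 𝕏 := ⟨P j, hPm j⟩
  let κ₂ : Kernel Ω 𝕏 := ⟨P k, hPm k⟩
  haveI : IsMarkovKernel κ₁ := ⟨fun ω => hm.probP j ω⟩
  haveI : IsMarkovKernel κ₂ := ⟨fun ω => hm.probP k ω⟩
  have hXm : Measurable fun ω => (X j i₁ ω, X k i₂ ω) :=
    (hX.1 j i₁).prodMk (hX.1 k i₂)
  have hμν : Pr.map (fun ω => (X j i₁ ω, X k i₂ ω)) = Pr.bind (κ₁ ×ₖ κ₂) := by
    haveI : IsProbabilityMeasure (Pr.map fun ω => (X j i₁ ω, X k i₂ ω)) :=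
      Measure.isProbabilityMeasure_map hXm.aemeasurable
    refine ext_of_generate_finite _ generateFrom_prod.symm isPiSystem_prod ?_ ?_
    · rintro s ⟨Aa, hAa, Bb, hBb, rfl⟩
      simp only [Set.mem_setOf_eq] at hAa hBb
      have hUm : MeasurableSet (Aa ×ˢ Bb) := hAa.prod hBb
      rw [Measure.map_apply hXm hUm, Measure.bind_apply hUm (κ₁ ×ₖ κ₂).measurable.aemeasurable]
      have hpre : (fun ω => (X j i₁ ω, X k i₂ ω)) ⁻¹' (Aa ×ˢ Bb)
          = {ω | X j i₁ ω ∈ Aa ∧ X k i₂ ω ∈ Bb} := by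
        ext ω; simp [Set.mem_prod]
      rw [hpre]
      set Af : ι × ℕ → Set 𝕏 := fun q => if q = (j, i₁) then Aa else Bb with hAf
      have hAmeas : ∀ q ∈ ({(j, i₁), (k, i₂)} : Finset (ι × ℕ)), MeasurableSet (Af q) := by
        intro q _
        by_cases hq : q = (j, i₁)
        · simpa [hAf, hq] using hAa
        · simpa [hAf, hq] using hBb
      have hsample := hX.2 {(j, i₁), (k, i₂)} Af hAmeas
      have hsetEq : {ω | ∀ q ∈ ({(j, i₁), (k, i₂)} : Finset (ι × ℕ)), X q.1 q.2 ω ∈ Af q}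
          = {ω | X j i₁ ω ∈ Aa ∧ X k i₂ ω ∈ Bb} := by
        ext ω
        simp only [Finset.mem_insert, Finset.mem_singleton, Set.mem_setOf_eq]
        constructor
        · intro hq
          refine ⟨?_, ?_⟩
          · have := hq (j, i₁) (Or.inl rfl)
            simpa [hAf] using this
          · have := hq (k, i₂) (Or.inr rfl)
            simpa [hAf, hne.symm] using this
        · rintro ⟨h1, h2⟩ q hq
          rcases hq with hq | hq
          · subst hq; simpa [hAf] using h1
          · subst hq; simpa [hAf, hne.symm] using h2
      have hprodEq : ∀ ω, ∏ q ∈ ({(j, i₁), (k, i₂)} : Finset (ι × ℕ)), P q.1 ω (Af q)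
          = P j ω Aa * P k ω Bb := by
        intro ω
        rw [Finset.prod_pair hne]
        have h1 : Af (j, i₁) = Aa := if_pos rfl
        have h2 : Af (k, i₂) = Bb := if_neg (by exact fun q => hne q.symm)
        rw [h1, h2]
      rw [hsetEq] at hsample
      rw [hsample]
      refine lintegral_congr fun ω => ?_
      haveI := hm.probP j ω
      haveI := hm.probP k ω
      have e1 : κ₁ ω = P j ω := rfl
      have e2 : κ₂ ω = P k ω := rfl
      rw [hprodEq ω, Kernel.prod_apply, e1, e2, Measure.prod_prod]
    · haveI : IsMarkovKernel (κ₁ ×ₖ κ₂) := by infer_instance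
      rw [Measure.bind_apply MeasurableSet.univ (κ₁ ×ₖ κ₂).measurable.aemeasurable]
      simp [measure_univ]
  have hdiagPre : (fun ω => (X j i₁ ω, X k i₂ ω)) ⁻¹' {p : 𝕏 × 𝕏 | p.1 = p.2}
      = {ω | X j i₁ ω = X k i₂ ω} := rfl
  have h1 : Pr {ω | X j i₁ ω = X k i₂ ω}
      = ∫⁻ ω, (κ₁ ×ₖ κ₂) ω {p : 𝕏 × 𝕏 | p.1 = p.2} ∂Pr := by
    rw [← hdiagPre, ← Measure.map_apply hXm measurableSet_diag, hμν,
      Measure.bind_apply measurableSet_diag (κ₁ ×ₖ κ₂).measurable.aemeasurable]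
  rw [h1]
  refine lintegral_congr_ae ?_
  filter_upwards [hm.repr j, hm.repr k, theta_inj hm] with ω hrj hrk hinj
  haveI := hm.probP j ω
  haveI := hm.probP k ω
  haveI hsf : SFinite (mixM P₀ (fun h => π k h ω) (fun h => θ h ω)) := by
    rw [← hrk]; infer_instance
  have e1 : κ₁ ω = P j ω := rfl
  have e2 : κ₂ ω = P k ω := rfl
  rw [Kernel.prod_apply, e1, e2, hrj, hrk, mixM_prod_diag P₀ _ _ _ hinj]

end Tie

/-- For a multivariate species sampling process, the correlation between
`P j (A)` and `P k (A)` (for `j ≠ k`, on any set `A` where both variances are positive) equals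
the across-group tie probability divided by the geometric mean of the within-group tie
probabilities; in particular it does not depend on `A`. -/
theorem mSSP_correlation {Ω : Type*} [MeasurableSpace Ω] {𝕏 : Type*} [MeasurableSpace 𝕏]
    [StandardBorelSpace 𝕏] {ι : Type*}
    (Pr : Measure Ω) [IsProbabilityMeasure Pr]
    (P₀ : Measure 𝕏) [IsProbabilityMeasure P₀] [NullSingletonClass P₀]
    (P : ι → Ω → Measure 𝕏) (hP : IsMSSP Pr P₀ P)
    (X : ι → ℕ → Ω → 𝕏) (hX : IsSample Pr P X)
    (j k : ι) (hjk : j ≠ k) (A : Set 𝕏) (hA : MeasurableSet A)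
    (hVj : 0 < variance (fun ω => (P j ω A).toReal) Pr)
    (hVk : 0 < variance (fun ω => (P k ω A).toReal) Pr) :
    corrR Pr (fun ω => (P j ω A).toReal) (fun ω => (P k ω A).toReal)
      = (Pr {ω | X j 0 ω = X k 0 ω}).toReal /
        (Real.sqrt (Pr {ω | X j 0 ω = X j 1 ω}).toReal *
          Real.sqrt (Pr {ω | X k 0 ω = X k 1 ω}).toReal) := by
  classical
  obtain ⟨π, θ, hm⟩ := hP
  haveI : MeasurableSingletonClass 𝕏 := by
    letI := upgradeStandardBorel 𝕏
    infer_instance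
  set Q : ι → ι → ℝ≥0∞ := fun a b =>
    ∫⁻ ω, ∑' h, ENNReal.ofReal (π a h ω) * ENNReal.ofReal (π b h ω) ∂Pr with hQdef
  -- tie probabilities
  have tjk : Pr {ω | X j 0 ω = X k 0 ω} = Q j k :=
    tie_prob hm hX j k 0 0 (fun hq => hjk (congrArg Prod.fst hq))
  have tjj : Pr {ω | X j 0 ω = X j 1 ω} = Q j j :=
    tie_prob hm hX j j 0 1 (fun hq => by simpa using congrArg Prod.snd hq)
  have tkk : Pr {ω | X k 0 ω = X k 1 ω} = Q k k :=
    tie_prob hm hX k k 0 1 (fun hq => by simpa using congrArg Prod.snd hq)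
  have hQjk_ne : Q j k ≠ ⊤ := by rw [← tjk]; exact measure_ne_top Pr _
  have hQjj_ne : Q j j ≠ ⊤ := by rw [← tjj]; exact measure_ne_top Pr _
  have hQkk_ne : Q k k ≠ ⊤ := by rw [← tkk]; exact measure_ne_top Pr _
  -- ENNReal moments
  set p : ℝ≥0∞ := P₀ A with hpdef
  have hp_ne : p ≠ ⊤ := measure_ne_top P₀ A
  have hp1 : p ≤ 1 := prob_le_one
  have hpp : p * p ≤ p := mul_le_of_le_one_left zero_le hp1
  have hmom2 : ∀ a b : ι, ∫⁻ ω, P a ω A * P b ω A ∂Pr = p * p + (p - p * p) * Q a b :=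
    fun a b => moment_mul hm a b A hA
  have hmom1 : ∀ a : ι, ∫⁻ ω, P a ω A ∂Pr = p := fun a => moment_one hm a A hA
  -- measurability / boundedness
  have measPA : ∀ a : ι, Measurable fun ω => P a ω A := fun a => hm.measP a A hA
  have hbnd : ∀ (a : ι) (ω : Ω), P a ω A ≤ 1 := fun a ω => by
    haveI := hm.probP a ω; exact prob_le_one
  have hlt : ∀ (a : ι), ∀ᵐ ω ∂Pr, P a ω A < ⊤ :=
    fun a => Filter.Eventually.of_forall fun ω =>
      lt_of_le_of_lt (hbnd a ω) ENNReal.one_lt_top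
  have hlt2 : ∀ (a b : ι), ∀ᵐ ω ∂Pr, P a ω A * P b ω A < ⊤ :=
    fun a b => Filter.Eventually.of_forall fun ω =>
      lt_of_le_of_lt (mul_le_one' (hbnd a ω) (hbnd b ω)) ENNReal.one_lt_top
  -- real integrals
  have hint1 : ∀ a : ι, ∫ ω, (P a ω A).toReal ∂Pr = p.toReal := by
    intro a
    rw [integral_toReal (measPA a).aemeasurable (hlt a), hmom1 a]
  have hint2 : ∀ a b : ι, ∫ ω, (P a ω A).toReal * (P b ω A).toReal ∂Pr
      = (p * p + (p - p * p) * Q a b).toReal := by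
    intro a b
    rw [← hmom2 a b, ← integral_toReal ((measPA a).fun_mul (measPA b)).aemeasurable (hlt2 a b)]
    exact integral_congr_ae (Filter.Eventually.of_forall fun ω => (ENNReal.toReal_mul).symm)
  -- real abbreviations
  set pr : ℝ := p.toReal with hprdef
  have hpr0 : 0 ≤ pr := ENNReal.toReal_nonneg
  have hpr1 : pr ≤ 1 := by
    simpa using ENNReal.toReal_mono (by simp) hp1
  set c : ℝ := pr - pr * pr with hcdef
  have hc0 : 0 ≤ c := by nlinarith
  have htoReal : ∀ a b : ι, Q a b ≠ ⊤ →
      (p * p + (p - p * p) * Q a b).toReal = pr * pr + c * (Q a b).toReal := by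
    intro a b hne
    rw [ENNReal.toReal_add (by finiteness) (by finiteness), ENNReal.toReal_mul,
      ENNReal.toReal_mul, ENNReal.toReal_sub_of_le hpp hp_ne, ENNReal.toReal_mul]
  -- covariance
  have hcov : covR Pr (fun ω => (P j ω A).toReal) (fun ω => (P k ω A).toReal)
      = c * (Q j k).toReal := by
    rw [covR, hint2 j k, hint1 j, hint1 k, htoReal j k hQjk_ne]
    ring
  -- variances
  have hvar : ∀ a : ι, Q a a ≠ ⊤ →
      variance (fun ω => (P a ω A).toReal) Pr = c * (Q a a).toReal := by
    intro a hane
    have hmem : MemLp (fun ω => (P a ω A).toReal) 2 Pr := by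
      refine MemLp.of_bound (measPA a).ennreal_toReal.aestronglyMeasurable 1 ?_
      refine Filter.Eventually.of_forall fun ω => ?_
      rw [Real.norm_eq_abs, abs_of_nonneg ENNReal.toReal_nonneg]
      simpa using ENNReal.toReal_mono (by simp) (hbnd a ω)
    rw [variance_eq_sub hmem]
    have hsq : ∫ ω, ((fun ω => (P a ω A).toReal) ^ 2) ω ∂Pr
        = (p * p + (p - p * p) * Q a a).toReal := by
      rw [← hint2 a a]
      exact integral_congr_ae (Filter.Eventually.of_forall fun ω => by
        simp [pow_two])
    rw [hsq, hint1 a, htoReal a a hane]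
    ring
  -- positivity of c and the diagonal Q's
  have hvj := hVj
  rw [hvar j hQjj_ne] at hvj
  have hvk := hVk
  rw [hvar k hQkk_ne] at hvk
  have hQjj0 : 0 ≤ (Q j j).toReal := ENNReal.toReal_nonneg
  have hQkk0 : 0 ≤ (Q k k).toReal := ENNReal.toReal_nonneg
  have hcpos : 0 < c := by
    rcases lt_or_eq_of_le hc0 with h | h
    · exact h
    · exfalso; rw [← h, zero_mul] at hvj; exact lt_irrefl _ hvj
  have hQjjpos : 0 < (Q j j).toReal := by
    rcases lt_or_eq_of_le hQjj0 with h | h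
    · exact h
    · exfalso; rw [← h, mul_zero] at hvj; exact lt_irrefl _ hvj
  have hQkkpos : 0 < (Q k k).toReal := by
    rcases lt_or_eq_of_le hQkk0 with h | h
    · exact h
    · exfalso; rw [← h, mul_zero] at hvk; exact lt_irrefl _ hvk
  -- final computation
  rw [corrR, hcov, hvar j hQjj_ne, hvar k hQkk_ne, tjk, tjj, tkk]
  rw [Real.sqrt_mul hc0, Real.sqrt_mul hc0]
  have hre : Real.sqrt c * Real.sqrt (Q j j).toReal * (Real.sqrt c * Real.sqrt (Q k k).toReal)
      = (Real.sqrt c * Real.sqrt c) * (Real.sqrt (Q j j).toReal * Real.sqrt (Q k k).toReal) := by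
    ring
  rw [hre, Real.mul_self_sqrt hc0, mul_div_mul_left _ _ (ne_of_gt hcpos)]

end MSSP
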